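/- The entries of any Markov triple are pairwise coprime: if a² + b² + c² = 3abc for positive integers a, b, c, then gcd(a, b) = gcd(b, c) = gcd(a, c) = 1. -/

import Mathlib

/-- Hurwitz descent: `x² + y² + z² = k·xyz` has no positive sorted solutions for `k ≥ 5`. -/
lemma markov_aux : ∀ n : ℕ, ∀ k x y z : ℤ, 5 ≤ k → 0 < x → 0 < y → 0 < z →
    x ≤ y → y ≤ z → (x + y + z).toNat ≤ n → x ^ 2 + y ^ 2 + z ^ 2 = k * x * y * z → False := by
  intro n
  induction n with
  | zero =>
    intro k x y z hk hx hy hz _ _ hn _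
    omega
  | succ n ih =>
    intro k x y z hk hx hy hz hxy hyz hn heq
    set z' := k * x * y - z with hz'def
    have hzz' : z * z' = x ^ 2 + y ^ 2 := by rw [hz'def]; nlinarith [heq]
    have hz'pos : 0 < z' := by
      rcases lt_or_ge 0 z' with h | h
      · exact h
      · nlinarith [sq_nonneg x, sq_nonneg y, mul_pos hx hx]
    have heq' : x ^ 2 + y ^ 2 + z' ^ 2 = k * x * y * z' := by
      rw [hz'def]; linear_combination heq
    rcases le_or_gt z z' with h | h
    · -- then z² ≤ z·z' = x² + y², contradiction
      have h1 : z ^ 2 ≤ x ^ 2 + y ^ 2 := by nlinarith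
      have h2 : x ^ 2 ≤ y * z := by nlinarith
      have h3 : y ^ 2 ≤ y * z := by nlinarith
      have hkx : (5 : ℤ) ≤ k * x := by nlinarith
      have h4 : 5 * (y * z) ≤ k * x * (y * z) :=
        mul_le_mul_of_nonneg_right hkx (mul_pos hy hz).le
      nlinarith [mul_pos hy hz]
    · -- descent: z' < z
      rcases le_or_gt y z' with h1 | h1
      · exact ih k x y z' hk hx hy hz'pos hxy h1 (by omega) heq'
      · rcases le_or_gt x z' with h2 | h2
        · exact ih k x z' y hk hx hz'pos hy h2 h1.le (by omega)
            (by linear_combination heq')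
        · exact ih k z' x y hk hz'pos hx hy h2.le hxy (by omega)
            (by linear_combination heq')

lemma markov_no_sol (k x y z : ℤ) (hk : 5 ≤ k) (hx : 0 < x) (hy : 0 < y) (hz : 0 < z)
    (heq : x ^ 2 + y ^ 2 + z ^ 2 = k * x * y * z) : False := by
  rcases le_total x y with hxy | hxy <;> rcases le_total y z with hyz | hyz <;>
    rcases le_total x z with hxz | hxz
  · exact markov_aux (x + y + z).toNat k x y z hk hx hy hz hxy hyz le_rfl heq
  · exact markov_aux (x + y + z).toNat k x y z hk hx hy hz hxy hyz le_rfl heq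
  · exact markov_aux (x + y + z).toNat k x z y hk hx hz hy hxz hyz (by omega)
      (by linear_combination heq)
  · exact markov_aux (x + y + z).toNat k z x y hk hz hx hy hxz hxy (by omega)
      (by linear_combination heq)
  · exact markov_aux (x + y + z).toNat k y x z hk hy hx hz hxy hxz (by omega)
      (by linear_combination heq)
  · exact markov_aux (x + y + z).toNat k y z x hk hy hz hx hyz hxz (by omega)
      (by linear_combination heq)
  · exact markov_aux (x + y + z).toNat k z y x hk hz hy hx hyz hxy (by omega)
      (by linear_combination heq)
  · exact markov_aux (x + y + z).toNat k z y x hk hz hy hx hyz hxy (by omega)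
      (by linear_combination heq)

lemma markov_gcd_one (u v w : ℤ) (hu : 0 < u) (hv : 0 < v) (hw : 0 < w)
    (h : u ^ 2 + v ^ 2 + w ^ 2 = 3 * u * v * w) : Int.gcd u v = 1 := by
  set g : ℤ := (Int.gcd u v : ℤ) with hg
  have hgu : g ∣ u := Int.gcd_dvd_left u v
  have hgv : g ∣ v := Int.gcd_dvd_right u v
  have hgpos : 0 < g := by
    have : 0 < Int.gcd u v := Int.gcd_pos_iff.mpr (Or.inl hu.ne')
    rw [hg]; exact_mod_cast this
  have hgw : g ∣ w := by
    have h2 : g ^ 2 ∣ w ^ 2 := by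
      have : w ^ 2 = 3 * u * v * w - u ^ 2 - v ^ 2 := by linarith
      rw [this]
      refine dvd_sub (dvd_sub ?_ ?_) ?_
      · obtain ⟨x, hx⟩ := hgu
        obtain ⟨y, hy⟩ := hgv
        exact ⟨3 * x * y * w, by rw [hx, hy]; ring⟩
      · exact pow_dvd_pow_of_dvd hgu 2
      · exact pow_dvd_pow_of_dvd hgv 2
    exact (Int.pow_dvd_pow_iff two_ne_zero).mp h2
  obtain ⟨x, hx⟩ := hgu
  obtain ⟨y, hy⟩ := hgv
  obtain ⟨z, hz⟩ := hgw
  have hxp : 0 < x := by nlinarith [hx ▸ hu, hgpos]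
  have hyp : 0 < y := by nlinarith [hy ▸ hv, hgpos]
  have hzp : 0 < z := by nlinarith [hz ▸ hw, hgpos]
  by_contra hne
  have h2 : 2 ≤ g := by omega
  have heq2 : x ^ 2 + y ^ 2 + z ^ 2 = (3 * g) * x * y * z := by
    have hcan : g ^ 2 * (x ^ 2 + y ^ 2 + z ^ 2) = g ^ 2 * ((3 * g) * x * y * z) := by
      rw [hx, hy, hz] at h
      linear_combination h
    exact mul_left_cancel₀ (pow_ne_zero 2 hgpos.ne') hcan
  exact markov_no_sol (3 * g) x y z (by linarith) hxp hyp hzp heq2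

theorem markov_pairwise_coprime (a b c : ℤ) (ha : 0 < a) (hb : 0 < b) (hc : 0 < c)
    (h : a ^ 2 + b ^ 2 + c ^ 2 = 3 * a * b * c) :
    Int.gcd a b = 1 ∧ Int.gcd b c = 1 ∧ Int.gcd a c = 1 := by
  refine ⟨markov_gcd_one a b c ha hb hc h,
    markov_gcd_one b c a hb hc ha (by linear_combination h),
    markov_gcd_one a c b ha hc hb (by linear_combination h)⟩
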